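/- arXiv:1902.10540 — 5 statements merged into one kernel-verified Lean document; each statement's English description precedes it below -/
import Mathlib

section
/- Let (X,μ) be a standard probability space with a separating sequence (C_n) of Borel sets, and let 𝒟 be a family of Borel sets whose image in the measure algebra MAlg(X,μ) is dense. Then there exists a full measure Borel subset X' ⊆ X such that 𝒟 separates the points of X': for all distinct x,y ∈ X' there is D ∈ 𝒟 with x ∈ D ↔ ¬(y ∈ D). -/
open MeasureTheory
open scoped ENNReal symmDiff

/-- Let `(X, μ)` be a standard probability space admitting a separating sequence `(C n)` of
measurable sets, and let `𝒟` be a family of measurable sets whose image in the measure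
algebra is dense (every measurable set is approximated in `μ`-symmetric-difference by
members of `𝒟`).  Then there is a full measure measurable subset `X'` whose points are
separated by `𝒟`. -/
theorem dense_family_separates_points
    {X : Type*} [MeasurableSpace X] [StandardBorelSpace X]
    (μ : Measure X) [IsProbabilityMeasure μ]
    (C : ℕ → Set X) (hCmeas : ∀ n, MeasurableSet (C n))
    (hCsep : ∀ x y : X, x ≠ y → ∃ n, (x ∈ C n ↔ y ∉ C n))
    (𝒟 : Set (Set X)) (h𝒟meas : ∀ D ∈ 𝒟, MeasurableSet D)
    (h𝒟dense : ∀ A : Set X, MeasurableSet A → ∀ ε : ℝ≥0∞, 0 < ε →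
      ∃ D ∈ 𝒟, μ (symmDiff A D) < ε) :
    ∃ X' : Set X, MeasurableSet X' ∧ μ X' = 1 ∧
      ∀ x ∈ X', ∀ y ∈ X', x ≠ y → ∃ D ∈ 𝒟, (x ∈ D ↔ y ∉ D) := by
  have hεpos : ∀ k : ℕ, (0 : ℝ≥0∞) < (2⁻¹) ^ k := fun k =>
    ENNReal.pow_pos (by simp) k
  choose D hD𝒟 hDclose using fun n k => h𝒟dense (C n) (hCmeas n) ((2⁻¹) ^ k) (hεpos k)
  set E : ℕ → ℕ → Set X := fun n k => symmDiff (C n) (D n k) with hE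
  have hEmeas : ∀ n k, MeasurableSet (E n k) := fun n k =>
    (hCmeas n).symmDiff (h𝒟meas _ (hD𝒟 n k))
  set N : ℕ → Set X := fun n => Filter.limsup (E n) Filter.atTop with hN
  have hNmeas : ∀ n, MeasurableSet (N n) := fun n =>
    MeasurableSet.measurableSet_limsup (hEmeas n)
  have hNnull : ∀ n, μ (N n) = 0 := by
    intro n
    apply measure_limsup_atTop_eq_zero
    refine ne_top_of_le_ne_top ?_ (ENNReal.tsum_le_tsum fun k => (hDclose n k).le)
    rw [ENNReal.tsum_geometric]
    rw [ENNReal.one_sub_inv_two]; simp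
  refine ⟨(⋃ n, N n)ᶜ, (MeasurableSet.iUnion hNmeas).compl, ?_, ?_⟩
  · rw [prob_compl_eq_one_iff (MeasurableSet.iUnion hNmeas)]
    exact measure_iUnion_null hNnull
  · intro x hx y hy hxy
    obtain ⟨n, hn⟩ := hCsep x y hxy
    simp only [Set.mem_compl_iff, Set.mem_iUnion, not_exists] at hx hy
    have hx' : ∀ᶠ k in Filter.atTop, x ∉ E n k := by
      have := hx n
      rw [hN] at this
      simpa [Filter.mem_limsup_iff_frequently_mem, Filter.not_frequently] using this
    have hy' : ∀ᶠ k in Filter.atTop, y ∉ E n k := by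
      have := hy n
      rw [hN] at this
      simpa [Filter.mem_limsup_iff_frequently_mem, Filter.not_frequently] using this
    obtain ⟨k, hkx, hky⟩ := (hx'.and hy').exists
    refine ⟨D n k, hD𝒟 n k, ?_⟩
    have hxD : x ∈ D n k ↔ x ∈ C n := by
      by_contra h
      exact hkx (by simp [hE, Set.mem_symmDiff]; tauto)
    have hyD : y ∈ D n k ↔ y ∈ C n := by
      by_contra h
      exact hky (by simp [hE, Set.mem_symmDiff]; tauto)
    rw [hxD, hyD]
    exact hn
end

section
/- Let T be a Borel bijection of a standard Borel space X. Then there is a partition of the support supp T = {x : T(x) ≠ x} into three Borel sets A_1, A_2, A_3 such that T(A_i) ∩ A_i = ∅ for i = 1,2,3. -/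
/-- The least color in `{0,1,2}` different from both `a` and `b`. -/
def freeColor (a b : ℕ) : ℕ :=
  if 0 ≠ a ∧ 0 ≠ b then 0 else if 1 ≠ a ∧ 1 ≠ b then 1 else 2

lemma freeColor_ne_left (a b : ℕ) : freeColor a b ≠ a := by
  unfold freeColor; split_ifs <;> omega

lemma freeColor_ne_right (a b : ℕ) : freeColor a b ≠ b := by
  unfold freeColor; split_ifs <;> omega

lemma freeColor_lt (a b : ℕ) : freeColor a b < 3 := by
  unfold freeColor; split_ifs <;> omega

/-- Greedy coloring along the stratification given by `idx`.  At stage `n+1` the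
points with `idx x = n` get a color avoiding the current colors of `S x` and `S' x`. -/
def colorAux {X : Type*} (S S' : X → X) (idx : X → ℕ) : ℕ → X → ℕ
  | 0 => fun _ => 0
  | n + 1 => fun x =>
      if idx x = n then
        freeColor (colorAux S S' idx n (S x)) (colorAux S S' idx n (S' x))
      else colorAux S S' idx n x

lemma colorAux_stable {X : Type*} (S S' : X → X) (idx : X → ℕ) :
    ∀ (n : ℕ) (x : X), idx x < n →
      colorAux S S' idx n x = colorAux S S' idx (idx x + 1) x := by
  intro n
  induction n with
  | zero => intro x hx; omega
  | succ k ih =>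
      intro x hx
      rcases eq_or_lt_of_le (Nat.lt_succ_iff.mp hx) with h | h
      · rw [← h]
      · have h2 : idx x ≠ k := by omega
        have hstep : colorAux S S' idx (k + 1) x = colorAux S S' idx k x := by
          simp only [colorAux, if_neg h2]
        rw [hstep]
        exact ih x h

lemma colorAux_self {X : Type*} (S S' : X → X) (idx : X → ℕ) (x : X) :
    colorAux S S' idx (idx x + 1) x =
      freeColor (colorAux S S' idx (idx x) (S x)) (colorAux S S' idx (idx x) (S' x)) := by
  simp [colorAux]

lemma colorAux_lt_three {X : Type*} (S S' : X → X) (idx : X → ℕ) (x : X) :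
    colorAux S S' idx (idx x + 1) x < 3 := by
  rw [colorAux_self]; exact freeColor_lt _ _

/-- Neighbors with distinct indices get distinct colors. -/
lemma colorAux_ne {X : Type*} (S S' : X → X) (idx : X → ℕ)
    (hS' : ∀ x, S' (S x) = x) (x : X) (hne : idx (S x) ≠ idx x) :
    colorAux S S' idx (idx x + 1) x ≠ colorAux S S' idx (idx (S x) + 1) (S x) := by
  rcases lt_or_gt_of_ne hne with h | h
  · -- `S x` is colored first
    rw [colorAux_self]
    have hst : colorAux S S' idx (idx x) (S x)
        = colorAux S S' idx (idx (S x) + 1) (S x) := colorAux_stable S S' idx _ _ h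
    rw [hst]
    exact freeColor_ne_left _ _
  · -- `x` is colored first
    rw [colorAux_self S S' idx (S x), hS']
    have hst : colorAux S S' idx (idx (S x)) x
        = colorAux S S' idx (idx x + 1) x := colorAux_stable S S' idx _ _ h
    rw [hst]
    intro hcontra
    exact (freeColor_ne_right _ _) hcontra.symm

lemma colorAux_measurable {X : Type*} [MeasurableSpace X] {S S' : X → X} {idx : X → ℕ}
    (hS : Measurable S) (hS' : Measurable S') (hidx : Measurable idx) (n : ℕ) :
    Measurable (colorAux S S' idx n) := by
  induction n with
  | zero => exact measurable_const
  | succ k ih =>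
      have hset : MeasurableSet {x | idx x = k} := hidx (measurableSet_singleton k)
      have h1 : Measurable fun x =>
          freeColor (colorAux S S' idx k (S x)) (colorAux S S' idx k (S' x)) := by
        exact (measurable_of_countable (fun p : ℕ × ℕ => freeColor p.1 p.2)).comp
          ((ih.comp hS).prodMk (ih.comp hS'))
      exact Measurable.ite hset h1 ih

/-- Let `T` be a Borel bijection of a standard Borel space `X`.  Then the support
`{x | T x ≠ x}` can be partitioned into three Borel sets `A₁, A₂, A₃` such that
`T (Aᵢ)` is disjoint from `Aᵢ` for each `i`. -/
theorem support_partition_three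
    {X : Type*} [MeasurableSpace X] [StandardBorelSpace X] (T : X ≃ᵐ X) :
    ∃ A₁ A₂ A₃ : Set X,
      MeasurableSet A₁ ∧ MeasurableSet A₂ ∧ MeasurableSet A₃ ∧
      Disjoint A₁ A₂ ∧ Disjoint A₁ A₃ ∧ Disjoint A₂ A₃ ∧
      A₁ ∪ A₂ ∪ A₃ = {x : X | T x ≠ x} ∧
      Disjoint (T '' A₁) A₁ ∧ Disjoint (T '' A₂) A₂ ∧ Disjoint (T '' A₃) A₃ := by
  classical
  obtain ⟨f, fmeas, finj⟩ :=
    MeasurableSpace.measurable_injection_nat_bool_of_countablySeparated X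
  have fn_meas : ∀ n, Measurable fun x => f x n :=
    fun n => (measurable_pi_apply n).comp fmeas
  -- separating index
  have hex : ∀ x : X, ∃ n, (T x = x ∨ f x n ≠ f (T x) n) := by
    intro x
    by_cases h : T x = x
    · exact ⟨0, Or.inl h⟩
    · have hf : f x ≠ f (T x) := fun hf => h (finj hf).symm
      obtain ⟨n, hn⟩ := Function.ne_iff.mp hf
      exact ⟨n, Or.inr hn⟩
  have hfix_meas : MeasurableSet {x : X | T x = x} := by
    have : {x : X | T x = x} = ⋂ n, {x | f (T x) n = f x n} := by
      ext x
      simp only [Set.mem_setOf_eq, Set.mem_iInter]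
      constructor
      · intro h n; rw [h]
      · intro h
        have : f (T x) = f x := funext h
        exact finj this
    rw [this]
    exact MeasurableSet.iInter fun n =>
      measurableSet_eq_fun ((fn_meas n).comp T.measurable) (fn_meas n)
  set sep : X → ℕ := fun x => Nat.find (hex x) with hsep_def
  have sep_meas : Measurable sep := by
    apply measurable_find
    intro k
    exact hfix_meas.union
      ((measurableSet_eq_fun (fn_meas k) ((fn_meas k).comp T.measurable)).compl)
  -- the bit distinguishing `x` from `T x` at the separating coordinate
  set g : X → Bool := fun x => f x (sep x) with hg_def
  have g_meas : Measurable g := by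
    apply measurable_to_countable'
    intro b
    have : g ⁻¹' {b} = ⋃ n, ({x | sep x = n} ∩ {x | f x n = b}) := by
      ext x
      simp only [Set.mem_preimage, Set.mem_singleton_iff, Set.mem_iUnion, Set.mem_inter_iff,
        Set.mem_setOf_eq, hg_def]
      constructor
      · intro h; exact ⟨sep x, rfl, h⟩
      · rintro ⟨n, hn, h⟩; rw [hn]; exact h
    rw [this]
    exact MeasurableSet.iUnion fun n =>
      (sep_meas (measurableSet_singleton n)).inter ((fn_meas n) (measurableSet_singleton b))
  set bit : X → ℕ := fun x => if g x then 0 else 1 with hbit_def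
  have bit_meas : Measurable bit :=
    (measurable_of_countable (fun b : Bool => if b then 0 else 1)).comp g_meas
  have bit_le : ∀ x, bit x ≤ 1 := by
    intro x; simp only [hbit_def]; split_ifs <;> omega
  set idx : X → ℕ := fun x => 2 * sep x + bit x with hidx_def
  have idx_meas : Measurable idx :=
    (measurable_of_countable (fun p : ℕ × ℕ => 2 * p.1 + p.2)).comp (sep_meas.prodMk bit_meas)
  -- key: neighbors in the support have different indices
  have hidx_ne : ∀ x : X, T x ≠ x → T (T x) ≠ T x → idx (T x) ≠ idx x := by
    intro x hx hTx heq
    have h1 : 2 * sep (T x) + bit (T x) = 2 * sep x + bit x := heq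
    have hsep_eq : sep (T x) = sep x ∧ bit (T x) = bit x := by
      have := bit_le x; have := bit_le (T x); omega
    have hspec := Nat.find_spec (hex x)
    have hne : f x (sep x) ≠ f (T x) (sep x) := by
      rcases hspec with h | h
      · exact absurd h hx
      · exact h
    have hb1 : bit x = (if f x (sep x) then 0 else 1) := rfl
    have hb2 : bit (T x) = (if f (T x) (sep (T x)) then 0 else 1) := rfl
    rw [hsep_eq.1] at hb2
    rcases Bool.eq_false_or_eq_true (f x (sep x)) with h | h <;>
      rcases Bool.eq_false_or_eq_true (f (T x) (sep x)) with h' | h' <;>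
        simp [h, h'] at hne hb1 hb2 <;> omega
  -- the coloring
  set S : X → X := fun x => T x with hS_def
  set S' : X → X := fun x => T.symm x with hS'_def
  have hSS' : ∀ x, S' (S x) = x := fun x => T.symm_apply_apply x
  set col : X → ℕ := fun x => colorAux S S' idx (idx x + 1) x with hcol_def
  have col_lt : ∀ x, col x < 3 := fun x => colorAux_lt_three S S' idx x
  have col_ne : ∀ x : X, T x ≠ x → T (T x) ≠ T x → col x ≠ col (T x) := by
    intro x hx hTx
    exact colorAux_ne S S' idx hSS' x (hidx_ne x hx hTx)
  have col_meas : ∀ k, MeasurableSet {x | col x = k} := by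
    intro k
    have : {x | col x = k} = ⋃ n, ({x | idx x = n} ∩ {x | colorAux S S' idx (n + 1) x = k}) := by
      ext x
      simp only [Set.mem_setOf_eq, Set.mem_iUnion, Set.mem_inter_iff]
      constructor
      · intro h; exact ⟨idx x, rfl, h⟩
      · rintro ⟨n, hn, h⟩; simp only [hcol_def, hn]; exact h
    rw [this]
    exact MeasurableSet.iUnion fun n =>
      (idx_meas (measurableSet_singleton n)).inter
        ((colorAux_measurable T.measurable T.symm.measurable idx_meas (n + 1))
          (measurableSet_singleton k))
  have hsupp_meas : MeasurableSet {x : X | T x ≠ x} := hfix_meas.compl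
  -- the three sets
  refine ⟨{x | T x ≠ x ∧ col x = 0}, {x | T x ≠ x ∧ col x = 1}, {x | T x ≠ x ∧ col x = 2},
    ?_, ?_, ?_, ?_, ?_, ?_, ?_, ?_, ?_, ?_⟩
  · exact hsupp_meas.inter (col_meas 0)
  · exact hsupp_meas.inter (col_meas 1)
  · exact hsupp_meas.inter (col_meas 2)
  · rw [Set.disjoint_iff]; rintro x ⟨⟨_, h0⟩, ⟨_, h1⟩⟩; omega
  · rw [Set.disjoint_iff]; rintro x ⟨⟨_, h0⟩, ⟨_, h1⟩⟩; omega
  · rw [Set.disjoint_iff]; rintro x ⟨⟨_, h0⟩, ⟨_, h1⟩⟩; omega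
  · ext x
    simp only [Set.mem_union, Set.mem_setOf_eq]
    constructor
    · rintro ((⟨h, _⟩ | ⟨h, _⟩) | ⟨h, _⟩) <;> exact h
    · intro h
      have := col_lt x
      interval_cases h' : col x
      · exact Or.inl (Or.inl ⟨h, rfl⟩)
      · exact Or.inl (Or.inr ⟨h, rfl⟩)
      · exact Or.inr ⟨h, rfl⟩
  all_goals {
    rw [Set.disjoint_iff]
    rintro y ⟨⟨x, ⟨hx, hcx⟩, rfl⟩, hTx, hcTx⟩
    exact col_ne x hx hTx (hcx.trans hcTx.symm)
  }
end

section
/- Let T be an aperiodic measure-preserving transformation of a standard probability space (X,μ). Then the set of A in the measure algebra MAlg(X,μ) such that the return time of T to A is unbounded (i.e., for every n, the set T^{-n}(A) \ ⋃_{i=0}^{n-1} T^{-i}(A) has positive measure) is a dense G_δ subset of MAlg(X,μ). -/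
open MeasureTheory
open scoped ENNReal symmDiff

/-- Aperiodicity gives, for each `N`, a positive-measure set `C` disjoint from its
first `N` preimage-iterates. -/
lemma exists_disjoint_base {X : Type*} [MeasurableSpace X] [StandardBorelSpace X]
    (μ : Measure X) [IsProbabilityMeasure μ]
    (T : X ≃ᵐ X)
    (haper : ∀ᵐ x ∂μ, ∀ n : ℕ, 1 ≤ n → (⇑T)^[n] x ≠ x) (N : ℕ) :
    ∃ C : Set X, MeasurableSet C ∧ 0 < μ C ∧
      ∀ m : ℕ, 1 ≤ m → m ≤ N → C ∩ (⇑T)^[m] ⁻¹' C = ∅ := by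
  obtain ⟨S, hSmeas, hSsep⟩ :=
    exists_seq_separating X (MeasurableSet.empty (α := X)) Set.univ
  set f : ℕ × Bool → Set X := fun p => if p.2 then S p.1 else (S p.1)ᶜ with hf
  have hfmeas : ∀ p, MeasurableSet (f p) := by
    rintro ⟨n, b⟩
    rcases b <;> simp [hf, hSmeas n, (hSmeas n).compl]
  have hfsep : ∀ x y : X, x ≠ y → ∃ p, x ∈ f p ∧ y ∉ f p := by
    intro x y hxy
    have : ¬ ∀ n, (x ∈ S n ↔ y ∈ S n) := fun h => hxy (hSsep x trivial y trivial h)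
    push_neg at this
    obtain ⟨n, hn⟩ := this
    by_cases hx : x ∈ S n
    · exact ⟨(n, true), by simpa [hf] using hx, by simp [hf]; tauto⟩
    · refine ⟨(n, false), by simpa [hf] using hx, by simp [hf]; tauto⟩
  set W : (Fin N → ℕ × Bool) → Set X := fun g =>
    (⋂ i, f (g i)) ∩ ⋂ i : Fin N, (⇑T)^[(i : ℕ) + 1] ⁻¹' (f (g i))ᶜ with hW
  have hWmeas : ∀ g, MeasurableSet (W g) := by
    intro g
    refine (MeasurableSet.iInter fun i => hfmeas (g i)).inter
      (MeasurableSet.iInter fun i => ?_)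
    exact (T.measurable.iterate _) (hfmeas (g i)).compl
  have hae : ∀ᵐ x ∂μ, x ∈ ⋃ g, W g := by
    filter_upwards [haper] with x hx
    have hchoice : ∀ i : Fin N, ∃ p, x ∈ f p ∧ (⇑T)^[(i : ℕ) + 1] x ∉ f p := by
      intro i
      exact hfsep x ((⇑T)^[(i : ℕ) + 1] x) (fun h => hx ((i : ℕ) + 1) (by omega) h.symm)
    choose g hg1 hg2 using hchoice
    exact Set.mem_iUnion.2 ⟨g, Set.mem_iInter.2 hg1, Set.mem_iInter.2 hg2⟩
  have hpos : ∃ g, 0 < μ (W g) := by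
    by_contra h
    push_neg at h
    have h0 : μ (⋃ g, W g) = 0 :=
      measure_iUnion_null fun g => le_antisymm (h g) (zero_le)
    have h1 : μ (⋃ g, W g)ᶜ = 0 := by
      rw [Set.compl_def]
      exact ae_iff.mp hae
    have : (1 : ℝ≥0∞) ≤ 0 := by
      calc (1 : ℝ≥0∞) = μ Set.univ := (measure_univ).symm
      _ ≤ μ (⋃ g, W g) + μ (⋃ g, W g)ᶜ := by
          rw [← Set.union_compl_self (⋃ g, W g)] at *
          exact measure_union_le _ _
      _ = 0 := by rw [h0, h1, add_zero]
    simp at this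
  obtain ⟨g, hg⟩ := hpos
  refine ⟨W g, hWmeas g, hg, ?_⟩
  intro m hm1 hmN
  ext x
  simp only [Set.mem_inter_iff, Set.mem_preimage, Set.mem_empty_iff_false, iff_false]
  rintro ⟨hx, hTx⟩
  set i : Fin N := ⟨m - 1, by omega⟩ with hi
  have h1 : (⇑T)^[m] x ∉ f (g i) := by
    have := hx.2
    rw [Set.mem_iInter] at this
    have := this i
    simp only [Set.mem_preimage, Set.mem_compl_iff] at this
    convert this using 3
    simp only [hi, Fin.val_mk]
    omega
  have h2 : (⇑T)^[m] x ∈ f (g i) := by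
    have := hTx.1
    rw [Set.mem_iInter] at this
    exact this i
  exact h1 h2

/-- Let `T` be an aperiodic measure-preserving transformation of a standard probability
space.  Then the set of measurable sets `A` with unbounded return time (for every `n`,
`T⁻ⁿ(A) \ ⋃_{i<n} T⁻ⁱ(A)` has positive measure) is a dense `G_δ` subset of the measure
algebra: it is the intersection, over measurable sets, of countably many families
`G k` each of which is open and dense for the metric `d(A, B) = μ (A ∆ B)`. -/
theorem unbounded_return_time_dense_Gdelta
    {X : Type*} [MeasurableSpace X] [StandardBorelSpace X]
    (μ : Measure X) [IsProbabilityMeasure μ]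
    (T : X ≃ᵐ X) (hT : MeasurePreserving T μ μ)
    (haper : ∀ᵐ x ∂μ, ∀ n : ℕ, 1 ≤ n → (⇑T)^[n] x ≠ x) :
    ∃ G : ℕ → Set (Set X),
      (∀ k, ∀ A ∈ G k, MeasurableSet A) ∧
      -- each `G k` is open in the measure algebra
      (∀ k, ∀ A ∈ G k, ∃ ε : ℝ≥0∞, 0 < ε ∧
        ∀ B : Set X, MeasurableSet B → μ (A ∆ B) < ε → B ∈ G k) ∧
      -- each `G k` is dense in the measure algebra
      (∀ k, ∀ A : Set X, MeasurableSet A → ∀ ε : ℝ≥0∞, 0 < ε →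
        ∃ B ∈ G k, μ (A ∆ B) < ε) ∧
      -- their intersection is exactly the sets with unbounded return time
      (∀ A : Set X, MeasurableSet A →
        ((∀ k, A ∈ G k) ↔
          ∀ n : ℕ, 0 < μ ((⇑T)^[n] ⁻¹' A \ ⋃ i ∈ Finset.range n, (⇑T)^[i] ⁻¹' A))) := by
  classical
  set Sk : ℕ → Set X → Set X := fun k A =>
    (⇑T)^[k] ⁻¹' A \ ⋃ i ∈ Finset.range k, (⇑T)^[i] ⁻¹' A with hSk
  refine ⟨fun k => {A | MeasurableSet A ∧ 0 < μ (Sk k A)}, fun k A hA => hA.1, ?_, ?_, ?_⟩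
  · -- openness
    intro k A hA
    obtain ⟨hAm, hApos⟩ := hA
    refine ⟨μ (Sk k A) / ((k : ℝ≥0∞) + 1),
      ENNReal.div_pos hApos.ne' (by simp), ?_⟩
    intro B hBm hclose
    refine ⟨hBm, ?_⟩
    by_contra hB0
    push_neg at hB0
    have hB0' : μ (Sk k B) = 0 := le_antisymm hB0 (zero_le)
    have hincl : Sk k A ⊆ Sk k B ∪ ⋃ i ∈ Finset.range (k + 1), (⇑T)^[i] ⁻¹' (A ∆ B) := by
      intro x hx
      by_cases hxB : x ∈ Sk k B
      · exact Or.inl hxB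
      right
      obtain ⟨hxk, hxlt⟩ := hx
      simp only [Set.mem_preimage] at hxk
      simp only [hSk, Set.mem_diff, Set.mem_iUnion, Set.mem_preimage, not_and, not_not,
        exists_prop, not_exists] at hxB hxlt
      by_cases hB : (⇑T)^[k] x ∈ B
      · have hex : ∃ i ∈ Finset.range k, (⇑T)^[i] x ∈ B := by
          by_contra hcon
          push_neg at hcon
          refine hxB ?_ fun i hi => hcon i hi
          exact hB
        obtain ⟨i, hik, hiB⟩ := hex
        have hik' := Finset.mem_range.1 hik
        refine Set.mem_biUnion (Finset.mem_range.2 (by omega : i < k + 1)) ?_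
        rw [Set.mem_preimage, Set.mem_symmDiff]
        exact Or.inr ⟨hiB, hxlt i hik⟩
      · refine Set.mem_biUnion (Finset.mem_range.2 (by omega : k < k + 1)) ?_
        rw [Set.mem_preimage, Set.mem_symmDiff]
        exact Or.inl ⟨hxk, hB⟩
    have hAB : MeasurableSet (A ∆ B) := hAm.symmDiff hBm
    have hle : μ (Sk k A) ≤ ((k : ℝ≥0∞) + 1) * μ (A ∆ B) := by
      calc μ (Sk k A) ≤ μ (Sk k B ∪ ⋃ i ∈ Finset.range (k + 1), (⇑T)^[i] ⁻¹' (A ∆ B)) :=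
            measure_mono hincl
        _ ≤ μ (Sk k B) + μ (⋃ i ∈ Finset.range (k + 1), (⇑T)^[i] ⁻¹' (A ∆ B)) :=
            measure_union_le _ _
        _ = μ (⋃ i ∈ Finset.range (k + 1), (⇑T)^[i] ⁻¹' (A ∆ B)) := by rw [hB0', zero_add]
        _ ≤ ∑ i ∈ Finset.range (k + 1), μ ((⇑T)^[i] ⁻¹' (A ∆ B)) :=
            measure_biUnion_finset_le _ _
        _ = ∑ _i ∈ Finset.range (k + 1), μ (A ∆ B) := by
            refine Finset.sum_congr rfl fun i _ => ?_
            exact (hT.iterate i).measure_preimage hAB.nullMeasurableSet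
        _ = ((k : ℝ≥0∞) + 1) * μ (A ∆ B) := by
            rw [Finset.sum_const, Finset.card_range, nsmul_eq_mul]
            push_cast
            ring
    have hlt : ((k : ℝ≥0∞) + 1) * μ (A ∆ B)
        < ((k : ℝ≥0∞) + 1) * (μ (Sk k A) / ((k : ℝ≥0∞) + 1)) :=
      (ENNReal.mul_lt_mul_iff_right (by simp) (by simp)).2 hclose
    exact absurd (hle.trans_lt (hlt.trans_le ENNReal.mul_div_le)) (lt_irrefl _)
  · -- density
    intro k A hAm ε hε
    obtain ⟨n, hn⟩ := ENNReal.exists_inv_nat_lt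
      (show ε / ((k : ℝ≥0∞) + 1) ≠ 0 from (ENNReal.div_pos hε.ne' (by simp)).ne')
    obtain ⟨C, hCm, hCpos, hCdisj⟩ := exists_disjoint_base μ T haper (max k n)
    set N := max k n with hN
    have hpre : ∀ i, MeasurableSet ((⇑T)^[i] ⁻¹' C) := fun i => (T.measurable.iterate i) hCm
    have hdisj : ∀ i j, i < j → j ≤ N → (⇑T)^[i] ⁻¹' C ∩ (⇑T)^[j] ⁻¹' C = ∅ := by
      intro i j hij hjN
      ext x
      simp only [Set.mem_inter_iff, Set.mem_preimage, Set.mem_empty_iff_false, iff_false]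
      rintro ⟨h1, h2⟩
      have hmem : (⇑T)^[i] x ∈ C ∩ (⇑T)^[j - i] ⁻¹' C := by
        refine ⟨h1, ?_⟩
        rw [Set.mem_preimage, ← Function.iterate_add_apply]
        have : j - i + i = j := by omega
        rw [this]
        exact h2
      rw [hCdisj (j - i) (by omega) (by omega)] at hmem
      exact hmem
    have hmeasC : ∀ i, μ ((⇑T)^[i] ⁻¹' C) = μ C :=
      fun i => (hT.iterate i).measure_preimage hCm.nullMeasurableSet
    have hsmall : μ C < ε / ((k : ℝ≥0∞) + 1) := by
      have hPD : (↑(Finset.range (N + 1)) : Set ℕ).PairwiseDisjoint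
          fun i => (⇑T)^[i] ⁻¹' C := by
        intro i hi j hj hij
        simp only [Finset.coe_range, Set.mem_Iio] at hi hj
        rcases lt_or_gt_of_ne hij with h | h
        · exact Set.disjoint_iff_inter_eq_empty.2 (hdisj i j h (by omega))
        · exact (Set.disjoint_iff_inter_eq_empty.2 (hdisj j i h (by omega))).symm
      have hsum : ((N : ℝ≥0∞) + 1) * μ C ≤ 1 := by
        calc ((N : ℝ≥0∞) + 1) * μ C
            = ∑ i ∈ Finset.range (N + 1), μ ((⇑T)^[i] ⁻¹' C) := by
              simp only [hmeasC, Finset.sum_const, Finset.card_range, nsmul_eq_mul]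
              push_cast
              ring
          _ = μ (⋃ i ∈ Finset.range (N + 1), (⇑T)^[i] ⁻¹' C) :=
              (measure_biUnion_finset hPD fun i _ => hpre i).symm
          _ ≤ 1 := prob_le_one
      have h1 : μ C ≤ ((N : ℝ≥0∞) + 1)⁻¹ := by
        rw [ENNReal.le_inv_iff_mul_le]
        calc μ C * ((N : ℝ≥0∞) + 1) = ((N : ℝ≥0∞) + 1) * μ C := mul_comm _ _
          _ ≤ 1 := hsum
      have h2 : ((N : ℝ≥0∞) + 1)⁻¹ ≤ ((n : ℝ≥0∞))⁻¹ := by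
        apply ENNReal.inv_le_inv'
        have : (n : ℝ≥0∞) ≤ (N : ℝ≥0∞) := by
          exact_mod_cast le_max_right k n
        exact this.trans (by simp)
      exact lt_of_le_of_lt (h1.trans h2) hn
    set D : Set X := ⋃ i ∈ Finset.range (k + 1), (⇑T)^[i] ⁻¹' C with hD
    have hDm : MeasurableSet D := Finset.measurableSet_biUnion _ fun i _ => hpre i
    set B : Set X := (A \ D) ∪ C with hB
    have hBm : MeasurableSet B := (hAm.diff hDm).union hCm
    refine ⟨B, ⟨hBm, ?_⟩, ?_⟩
    · -- positivity of Sk k B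
      have hsub : (⇑T)^[k] ⁻¹' C ⊆ Sk k B := by
        intro x hx
        rw [Set.mem_preimage] at hx
        constructor
        · exact Or.inr hx
        · intro hmem
          simp only [Set.mem_iUnion, Set.mem_preimage, exists_prop] at hmem
          obtain ⟨i, hik, hiB⟩ := hmem
          rw [Finset.mem_range] at hik
          have hik' : (⇑T)^[i] x ∈ (⇑T)^[k - i] ⁻¹' C := by
            rw [Set.mem_preimage, ← Function.iterate_add_apply]
            have h' : k - i + i = k := by omega
            rw [h']
            exact hx
          rcases hiB with hAD | hC
          · refine hAD.2 ?_
            exact Set.mem_biUnion (Finset.mem_range.2 (by omega : k - i < k + 1)) hik'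
          · have hmem2 : (⇑T)^[i] x ∈ C ∩ (⇑T)^[k - i] ⁻¹' C := ⟨hC, hik'⟩
            rw [hCdisj (k - i) (by omega) (by omega : k - i ≤ N)] at hmem2
            exact hmem2
      calc (0 : ℝ≥0∞) < μ C := hCpos
        _ = μ ((⇑T)^[k] ⁻¹' C) := (hmeasC k).symm
        _ ≤ μ (Sk k B) := measure_mono hsub
    · -- closeness
      have hABD : A ∆ B ⊆ D := by
        intro x hx
        rw [Set.mem_symmDiff] at hx
        rcases hx with ⟨hxA, hxB⟩ | ⟨hxB, hxA⟩
        · by_contra hxD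
          exact hxB (Or.inl ⟨hxA, hxD⟩)
        · rcases hxB with hAD | hC
          · exact absurd hAD.1 hxA
          · exact Set.mem_biUnion (Finset.mem_range.2 (by omega : 0 < k + 1))
              (by simpa using hC)
      calc μ (A ∆ B) ≤ μ D := measure_mono hABD
        _ ≤ ∑ i ∈ Finset.range (k + 1), μ ((⇑T)^[i] ⁻¹' C) := measure_biUnion_finset_le _ _
        _ = ((k : ℝ≥0∞) + 1) * μ C := by
            simp only [hmeasC, Finset.sum_const, Finset.card_range, nsmul_eq_mul]
            push_cast
            ring
        _ < ((k : ℝ≥0∞) + 1) * (ε / ((k : ℝ≥0∞) + 1)) :=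
            (ENNReal.mul_lt_mul_iff_right (by simp) (by simp)).2 hsmall
        _ ≤ ε := ENNReal.mul_div_le
  · intro A hA
    exact ⟨fun h n => (h n).2, fun h k => ⟨hA, h k⟩⟩
end

section
/- Let G be a group with a right-invariant metric d such that for all K > 0 and all integers N ≥ 1, the N-fold product of the ball B_d(e, K/N) is contained in B_d(e,K), and B_d(e,K) is contained in the (N+1)-fold product of B_d(e, K/N). Then d is large-scale geodesic: there is a constant (e.g. K = 4) such that any g, h ∈ G can be joined by a chain g = x_0, x_1, ..., x_n = h with d(x_i, x_{i+1}) ≤ K and ∑ d(x_i, x_{i+1}) ≤ K d(g,h). -/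
open scoped Pointwise

/-- Auxiliary: an element of the `n`-fold product of a ball around `1` can be joined
to `1` by a chain of `n` steps each of size at most `c`. -/
lemma chain_of_mem_pow {G : Type*} [Group G] (d : G → G → ℝ)
    (hsymm : ∀ g h : G, d g h = d h g)
    (hrinv : ∀ g h k : G, d (g * k) (h * k) = d g h)
    (c : ℝ) : ∀ n : ℕ, ∀ y : G, y ∈ ({g : G | d g 1 ≤ c} ^ n) →
      ∃ x : ℕ → G, x 0 = 1 ∧ x n = y ∧ ∀ i < n, d (x i) (x (i + 1)) ≤ c := by
  intro n
  induction n with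
  | zero =>
    intro y hy
    simp only [pow_zero, Set.mem_one] at hy
    exact ⟨fun _ => 1, rfl, hy.symm, fun i hi => absurd hi (Nat.not_lt_zero i)⟩
  | succ n ih =>
    intro y hy
    rw [pow_succ'] at hy
    obtain ⟨a, ha, z, hz, rfl⟩ := hy
    obtain ⟨x, hx0, hxn, hxs⟩ := ih z hz
    refine ⟨fun i => if i ≤ n then x i else a * z, by simp [hx0], by simp, ?_⟩
    intro i hi
    rcases Nat.lt_or_ge i n with h | h
    · simp only [if_pos h.le, if_pos (Nat.succ_le_of_lt h)]
      exact hxs i h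
    · have hin : i = n := le_antisymm (Nat.lt_succ_iff.mp hi) h
      subst hin
      have h2 : d z (a * z) = d 1 a := by
        have := hrinv 1 a z; rwa [one_mul] at this
      simp only [le_refl, if_pos, Nat.not_succ_le_self, if_neg, hxn, if_false, h2,
        hsymm 1 a]
      exact ha

/-- Let `G` be a group with a right-invariant metric `d` such that for every `K > 0` and
every `N ≥ 1`, the `N`-fold (pointwise) product of the ball `B(e, K/N)` is contained in
`B(e, K)`, and `B(e, K)` is contained in the `(N+1)`-fold product of `B(e, K/N)`.
Then `d` is large-scale geodesic: there is a constant `K > 0` such that any `g, h` are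
joined by a chain with steps `≤ K` and total length `≤ K · d(g, h)`. -/
theorem largeScaleGeodesic_of_ball_product_inclusions
    {G : Type*} [Group G] (d : G → G → ℝ)
    (hsymm : ∀ g h : G, d g h = d h g)
    (htri : ∀ g h k : G, d g k ≤ d g h + d h k)
    (hself : ∀ g : G, d g g = 0)
    (hsep : ∀ g h : G, d g h = 0 → g = h)
    (hrinv : ∀ g h k : G, d (g * k) (h * k) = d g h)
    (hballs : ∀ K : ℝ, 0 < K → ∀ N : ℕ, 1 ≤ N →
      ({g : G | d g 1 ≤ K / N} ^ N ⊆ {g : G | d g 1 ≤ K}) ∧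
      ({g : G | d g 1 ≤ K} ⊆ {g : G | d g 1 ≤ K / N} ^ (N + 1))) :
    ∃ K : ℝ, 0 < K ∧ ∀ g h : G, ∃ (n : ℕ) (x : ℕ → G),
      x 0 = g ∧ x n = h ∧
      (∀ i < n, d (x i) (x (i + 1)) ≤ K) ∧
      (∑ i ∈ Finset.range n, d (x i) (x (i + 1))) ≤ K * d g h := by
  refine ⟨4, by norm_num, fun g h => ?_⟩
  have hnonneg : 0 ≤ d g h := by
    have := htri g h g
    rw [hself, hsymm h g] at this
    linarith
  rcases eq_or_lt_of_le hnonneg with hD | hD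
  · -- d g h = 0, so g = h
    have : g = h := hsep g h hD.symm
    subst this
    exact ⟨0, fun _ => g, rfl, rfl, fun i hi => absurd hi (Nat.not_lt_zero i),
      by simp [hself]⟩
  · set D := d g h with hDdef
    set N : ℕ := ⌈D⌉₊ with hN
    have hN1 : 1 ≤ N := Nat.one_le_iff_ne_zero.mpr (by
      simp only [hN, ne_eq, Nat.ceil_eq_zero, not_le]; exact hD)
    have hNpos : (0 : ℝ) < N := by exact_mod_cast hN1
    have hDleN : D ≤ N := Nat.le_ceil D
    obtain ⟨_, hsub⟩ := hballs D hD N hN1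
    have hmem : h * g⁻¹ ∈ {g : G | d g 1 ≤ D} := by
      have : d (h * g⁻¹ * g) (1 * g) = d (h * g⁻¹) 1 := hrinv _ _ g
      rw [inv_mul_cancel_right, one_mul] at this
      rw [Set.mem_setOf_eq, ← this, hsymm h g]
    obtain ⟨x, hx0, hxn, hxs⟩ :=
      chain_of_mem_pow d hsymm hrinv (D / N) (N + 1) (h * g⁻¹) (hsub hmem)
    refine ⟨N + 1, fun i => x i * g, by simp [hx0], by simp [hxn], ?_, ?_⟩
    · intro i hi
      rw [hrinv]
      have hstep := hxs i hi
      have h1 : D / N ≤ 1 := by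
        rw [div_le_one hNpos]; exact hDleN
      linarith
    · have hsum : ∀ i ∈ Finset.range (N + 1), d (x i * g) (x (i + 1) * g) ≤ D / N := by
        intro i hi
        rw [hrinv]
        exact hxs i (Finset.mem_range.mp hi)
      calc ∑ i ∈ Finset.range (N + 1), d (x i * g) (x (i + 1) * g)
          ≤ (N + 1) * (D / N) := by
            simpa using Finset.sum_le_card_nsmul _ _ _ hsum
        _ ≤ (2 * N) * (D / N) := by
            apply mul_le_mul_of_nonneg_right
            · have : (1:ℝ) ≤ N := by exact_mod_cast hN1
              linarith
            · positivity
        _ = 2 * D := by field_simp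
        _ ≤ 4 * D := by linarith
end

section
/- Let (p_n) be the sequence of primes (p_0 = 2) and (k_n) a sequence of integers with k_n ≥ 4^{n·2^n + 2^n}. Then for every n ≥ 1, (∏_{i<n} p_i) · (∑_{i≥n} p_i/k_i) ≤ 2^{-n·2^n}. -/
lemma nth_prime_le_two_pow (i : ℕ) : Nat.nth Nat.Prime i ≤ 2 ^ 2 ^ i := by
  induction i with
  | zero => simp [Nat.nth_prime_zero_eq_two]
  | succ i ih =>
    have hpos : Nat.nth Nat.Prime i ≠ 0 := (Nat.prime_nth_prime i).pos.ne'
    obtain ⟨q, hq, hlt, hle⟩ := Nat.exists_prime_lt_and_le_two_mul _ hpos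
    have h1 : Nat.nth Nat.Prime (i + 1) ≤ q := by
      by_contra h
      exact absurd (Nat.le_nth_of_lt_nth_succ (lt_of_not_ge h) hq) (not_le.mpr hlt)
    calc Nat.nth Nat.Prime (i + 1) ≤ 2 * Nat.nth Nat.Prime i := h1.trans hle
      _ ≤ 2 * 2 ^ 2 ^ i := by omega
      _ = 2 ^ (2 ^ i + 1) := by ring
      _ ≤ 2 ^ 2 ^ (i + 1) := by
          apply Nat.pow_le_pow_right (by norm_num)
          have := Nat.one_le_two_pow (n := i)
          rw [pow_succ]; omega

/-- Let `p i` denote the `i`-th prime (`p 0 = 2`) and `(k i)` a sequence of integers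
with `k i ≥ 4 ^ (i·2ⁱ + 2ⁱ)`.  Then for every `n ≥ 1`,
`(∏_{i<n} p i) · (∑_{i≥n} p i / k i) ≤ 2 ^ (-n·2ⁿ)`. -/
theorem prime_product_tail_sum_bound
    (k : ℕ → ℕ) (hk : ∀ i : ℕ, 4 ^ (i * 2 ^ i + 2 ^ i) ≤ k i)
    (n : ℕ) (hn : 1 ≤ n) :
    (∏ i ∈ Finset.range n, (Nat.nth Nat.Prime i : ℝ)) *
      (∑' i : ℕ, (Nat.nth Nat.Prime (n + i) : ℝ) / (k (n + i) : ℝ)) ≤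
    ((2 : ℝ) ^ (n * 2 ^ n))⁻¹ := by
  set f : ℕ → ℝ := fun i => (Nat.nth Nat.Prime (n + i) : ℝ) / (k (n + i) : ℝ) with hf
  set c : ℝ := ((2 : ℝ) ^ ((n + 1) * 2 ^ n))⁻¹ with hc
  set g : ℕ → ℝ := fun i => c * (2 : ℝ)⁻¹ ^ (i + 1) with hg
  have hfnn : ∀ i, 0 ≤ f i := fun i => by positivity
  -- termwise bound f ≤ g
  have hfg : ∀ i, f i ≤ g i := by
    intro i
    have hE : (0:ℝ) < (4 : ℝ) ^ ((n + i) * 2 ^ (n + i) + 2 ^ (n + i)) := by positivity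
    have hkR : (4 : ℝ) ^ ((n + i) * 2 ^ (n + i) + 2 ^ (n + i)) ≤ (k (n + i) : ℝ) := by
      exact_mod_cast (by exact_mod_cast hk (n + i) : (4:ℕ) ^ ((n + i) * 2 ^ (n + i) + 2 ^ (n + i)) ≤ k (n + i))
    have hpR : (Nat.nth Nat.Prime (n + i) : ℝ) ≤ (2 : ℝ) ^ 2 ^ (n + i) := by
      exact_mod_cast nth_prime_le_two_pow (n + i)
    have step1 : f i ≤ (2 : ℝ) ^ 2 ^ (n + i) /
        (4 : ℝ) ^ ((n + i) * 2 ^ (n + i) + 2 ^ (n + i)) :=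
      div_le_div₀ (by positivity) hpR hE hkR
    refine step1.trans ?_
    have h4 : (4 : ℝ) ^ ((n + i) * 2 ^ (n + i) + 2 ^ (n + i)) =
        (2 : ℝ) ^ (2 * ((n + i) * 2 ^ (n + i) + 2 ^ (n + i))) := by
      rw [show (4:ℝ) = 2^2 by norm_num, ← pow_mul]
    have hgeq : g i = ((2 : ℝ) ^ ((n + 1) * 2 ^ n + (i + 1)))⁻¹ := by
      show c * (2:ℝ)⁻¹ ^ (i + 1) = _
      rw [hc, inv_pow, ← mul_inv, ← pow_add]
    rw [h4, hgeq, inv_eq_one_div, div_le_div_iff₀ (by positivity) (by positivity),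
      one_mul, ← pow_add]
    apply pow_le_pow_right₀ one_le_two
    -- nat inequality
    have h1 : i + 1 ≤ 2 ^ (n + i) := le_trans (Nat.lt_two_pow_self (n := i)) (Nat.pow_le_pow_right (by norm_num) (by omega))
    have h2 : 2 ^ n ≤ 2 ^ (n + i) := Nat.pow_le_pow_right (by norm_num) (by omega)
    nlinarith [Nat.one_le_two_pow (n := n + i), sq_nonneg (2 ^ (n + i))]
  -- summability of g and its sum
  have hr : |(2 : ℝ)⁻¹| < 1 := by rw [abs_of_pos]; norm_num; norm_num
  have hsg : Summable g := by
    have : Summable (fun i : ℕ => (2 : ℝ)⁻¹ ^ i) := summable_geometric_of_lt_one (by norm_num) (by norm_num)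
    simpa [hg, pow_succ, mul_comm, mul_assoc, mul_left_comm] using
      (this.mul_left (c * 2⁻¹))
  have htg : ∑' i, g i = c := by
    have : ∑' i : ℕ, (2 : ℝ)⁻¹ ^ i = 2 := by
      rw [tsum_geometric_of_lt_one (by norm_num) (by norm_num)]; norm_num
    calc ∑' i, g i = ∑' i, (c * 2⁻¹) * (2 : ℝ)⁻¹ ^ i := by
          apply tsum_congr; intro i; rw [hg]; ring
      _ = (c * 2⁻¹) * ∑' i : ℕ, (2 : ℝ)⁻¹ ^ i := tsum_mul_left
      _ = c := by rw [this]; ring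
  have hsf : Summable f := Summable.of_nonneg_of_le hfnn hfg hsg
  have hS : ∑' i, f i ≤ c := (Summable.tsum_le_tsum hfg hsf hsg).trans htg.le
  -- product bound
  have hP : ∏ i ∈ Finset.range n, (Nat.nth Nat.Prime i : ℝ) ≤ (2 : ℝ) ^ 2 ^ n := by
    calc ∏ i ∈ Finset.range n, (Nat.nth Nat.Prime i : ℝ)
        ≤ ∏ i ∈ Finset.range n, (2 : ℝ) ^ 2 ^ i := by
          apply Finset.prod_le_prod (fun i _ => by positivity)
          intro i _
          exact_mod_cast nth_prime_le_two_pow i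
      _ = (2 : ℝ) ^ (∑ i ∈ Finset.range n, 2 ^ i) := by
          rw [← Finset.prod_pow_eq_pow_sum]
      _ ≤ (2 : ℝ) ^ 2 ^ n := by
          apply pow_le_pow_right₀ one_le_two
          have hsum : ∀ m, ∑ i ∈ Finset.range m, 2 ^ i = 2 ^ m - 1 := by
            intro m
            induction m with
            | zero => simp
            | succ m ih =>
              rw [Finset.sum_range_succ, ih, pow_succ]
              have := Nat.one_le_two_pow (n := m)
              omega
          rw [hsum n]
          exact Nat.sub_le _ _
  have hPnn : (0:ℝ) ≤ ∏ i ∈ Finset.range n, (Nat.nth Nat.Prime i : ℝ) :=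
    Finset.prod_nonneg (fun i _ => by positivity)
  calc (∏ i ∈ Finset.range n, (Nat.nth Nat.Prime i : ℝ)) * (∑' i, f i)
      ≤ (2 : ℝ) ^ 2 ^ n * c :=
        mul_le_mul hP hS (tsum_nonneg hfnn) (by positivity)
    _ = ((2 : ℝ) ^ (n * 2 ^ n))⁻¹ := by
        rw [hc, show (n + 1) * 2 ^ n = 2 ^ n + n * 2 ^ n by ring, pow_add, mul_inv,
          ← mul_assoc, mul_inv_cancel₀ (by positivity), one_mul]
end
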